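/- Let (a_1, a_2) ∈ ℤ^2 be a pair of coprime integers. Then there exist Galois conjugates γ_1, γ_2 over ℚ (nonzero roots of a common irreducible polynomial over ℚ) with a_1 γ_1 + a_2 γ_2 = 0 if and only if a_1 = a_2 or a_1 = -a_2. -/

import Mathlib

open Polynomial

theorem smyth_pair_iff (a₁ a₂ : ℤ) (h : IsCoprime a₁ a₂) :
    (∃ (p : Polynomial ℚ) (γ₁ γ₂ : ℂ), Irreducible p ∧ γ₁ ≠ 0 ∧ γ₂ ≠ 0 ∧
      Polynomial.aeval γ₁ p = 0 ∧ Polynomial.aeval γ₂ p = 0 ∧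
      (a₁ : ℂ) * γ₁ + (a₂ : ℂ) * γ₂ = 0) ↔ a₁ = a₂ ∨ a₁ = -a₂ := by
  constructor
  · rintro ⟨p, γ₁, γ₂, hirr, hγ₁, hγ₂, hr₁, hr₂, hsum⟩
    have ha₁ : a₁ ≠ 0 := by
      rintro rfl
      have h2 : (a₂ : ℂ) = 0 ∨ γ₂ = 0 := by
        simpa [mul_eq_zero] using hsum
      rcases h2 with h2 | h2
      · have : a₂ = 0 := by exact_mod_cast h2
        subst this
        exact not_isCoprime_zero_zero h
      · exact hγ₂ h2
    have ha₂ : a₂ ≠ 0 := by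
      rintro rfl
      have h2 : (a₁ : ℂ) = 0 ∨ γ₁ = 0 := by
        simpa [mul_eq_zero] using hsum
      rcases h2 with h2 | h2
      · exact ha₁ (by exact_mod_cast h2)
      · exact hγ₁ h2
    set c : ℚ := -(a₁ : ℚ) / (a₂ : ℚ) with hc
    have ha₂Q : (a₂ : ℚ) ≠ 0 := Int.cast_ne_zero.mpr ha₂
    have hcne : c ≠ 0 := by
      simp [hc, _root_.div_eq_zero_iff, Int.cast_eq_zero, ha₁, ha₂]
    have hγ₂eq : ((c : ℂ)) * γ₁ = γ₂ := by
      have h2 : (a₂ : ℂ) ≠ 0 := Int.cast_ne_zero.mpr ha₂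
      have hc' : (c:ℂ) = -(a₁:ℂ)/(a₂:ℂ) := by rw [hc]; push_cast; ring
      rw [hc', div_mul_eq_mul_div, div_eq_iff h2]
      linear_combination -hsum
    have hint : IsIntegral ℚ γ₁ := (IsAlgebraic.isIntegral ⟨p, hirr.ne_zero, hr₁⟩)
    set m : ℚ[X] := minpoly ℚ γ₁ with hm
    have hmdvdp : m ∣ p := minpoly.dvd ℚ γ₁ hr₁
    have hmonic : m.Monic := minpoly.monic hint
    have hr₂' : Polynomial.aeval γ₂ m = 0 := by
      obtain ⟨t, rfl⟩ := hmdvdp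
      have ht : IsUnit t := (hirr.isUnit_or_isUnit rfl).resolve_left
        (by simpa using (minpoly.not_isUnit ℚ γ₁))
      obtain ⟨d, hd, rfl⟩ := Polynomial.isUnit_iff.mp ht
      have hd0 : (algebraMap ℚ ℂ) d ≠ 0 := by
        simpa using hd.ne_zero
      have := hr₂
      rw [map_mul, aeval_C, mul_eq_zero] at this
      tauto
    set n : ℕ := m.natDegree with hn
    have hnpos : 0 < n := minpoly.natDegree_pos hint
    set q : ℚ[X] := m.comp (C c * X) with hq
    have hinner : (C c * X).natDegree = 1 := by
      simpa using natDegree_C_mul_X c hcne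
    have hq1 : Polynomial.aeval γ₁ q = 0 := by
      rw [hq, aeval_comp]
      simp only [map_mul, aeval_C, aeval_X]
      rw [show (algebraMap ℚ ℂ) c * γ₁ = γ₂ by simpa using hγ₂eq]
      exact hr₂'
    obtain ⟨r, hqr⟩ := minpoly.dvd ℚ γ₁ hq1
    rw [← hm] at hqr
    have hqdeg : q.natDegree = n := by
      rw [hq, natDegree_comp, hinner, mul_one]
    have hqlead : q.leadingCoeff = c ^ n := by
      rw [hq, leadingCoeff_comp (by rw [hinner]; norm_num)]
      have : (C c * X).leadingCoeff = c := by
        simp [leadingCoeff_C_mul_X]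
      rw [this, hmonic.leadingCoeff, one_mul]
    have hqne : q ≠ 0 := by
      intro h0
      rw [h0, leadingCoeff_zero] at hqlead
      exact hcne (pow_eq_zero_iff hnpos.ne' |>.mp hqlead.symm)
    have hrne : r ≠ 0 := by
      rintro rfl
      rw [mul_zero] at hqr
      exact hqne hqr
    have hrdeg : r.natDegree = 0 := by
      have h2 := hqdeg
      rw [hqr, natDegree_mul (hmonic.ne_zero) hrne] at h2
      omega
    obtain ⟨k, rfl⟩ : ∃ k, r = C k := ⟨r.coeff 0, (eq_C_of_natDegree_eq_zero hrdeg)⟩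
    have hk : k = c ^ n := by
      have := hqlead
      rw [hqr, leadingCoeff_mul, hmonic.leadingCoeff, one_mul, leadingCoeff_C] at this
      exact this
    have hcoeff0 : m.coeff 0 * k = m.coeff 0 := by
      have h1 : q.coeff 0 = m.coeff 0 := by
        rw [coeff_zero_eq_eval_zero, coeff_zero_eq_eval_zero, hq, eval_comp]
        simp
      rw [hqr, coeff_mul_C] at h1
      exact h1
    have hm0 : m.coeff 0 ≠ 0 := minpoly.coeff_zero_ne_zero hint hγ₁
    have hk1 : k = 1 := by
      field_simp at hcoeff0
      tauto
    have hcn : c ^ n = 1 := by rw [← hk, hk1]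
    have habs : |c| = 1 := by
      have h1 : |c| ^ n = 1 := by rw [← abs_pow, hcn, abs_one]
      by_contra hne
      rcases lt_or_gt_of_ne hne with hlt | hgt
      · have := pow_lt_one₀ (abs_nonneg c) hlt hnpos.ne'
        linarith
      · have := one_lt_pow₀ hgt hnpos.ne'
        linarith
    rcases abs_eq (by norm_num : (0:ℚ) ≤ 1) |>.mp habs with h1 | h1
    · right
      rw [hc] at h1
      field_simp at h1
      have : (a₁ : ℚ) = ((-a₂ : ℤ) : ℚ) := by push_cast; linarith
      exact_mod_cast this
    · left
      rw [hc] at h1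
      field_simp at h1
      have h1' : (a₁ : ℚ) = a₂ := by linarith
      exact_mod_cast h1'
  · rintro (rfl | rfl)
    · refine ⟨Polynomial.cyclotomic 4 ℚ, Complex.I, -Complex.I,
        cyclotomic.irreducible_rat (by norm_num), Complex.I_ne_zero,
        neg_ne_zero.mpr Complex.I_ne_zero, ?_, ?_, by ring⟩ <;>
      · have h4 : Polynomial.cyclotomic 4 ℚ = X ^ 2 + 1 := by
          have h2 : (4:ℕ) = 2 ^ (1+1) := by norm_num
          rw [h2, cyclotomic_prime_pow_eq_geom_sum Nat.prime_two]
          simp [Finset.sum_range_succ]; ring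
        simp [h4, Complex.I_sq]
    · refine ⟨X - Polynomial.C 1, 1, 1, irreducible_X_sub_C 1, one_ne_zero, one_ne_zero,
        by simp, by simp, ?_⟩
      push_cast
      ring
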